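/- Every n-Hausdorff space can be densely embedded in an n-H-closed space. -/

import Mathlib

open Set Topology Function

universe u v

/-- A space is `n`-Hausdorff if any `n` distinct points admit open neighborhoods
with empty intersection. -/
def NHausdorff (X : Type u) [TopologicalSpace X] (n : ℕ) : Prop :=
  ∀ x : Fin n → X, Function.Injective x →
    ∃ U : Fin n → Set X, (∀ i, IsOpen (U i) ∧ x i ∈ U i) ∧ (⋂ i, U i) = (∅ : Set X)

/-- An open filter on `X`: a nonempty family of nonempty open sets closed under
finite intersections and open supersets. -/
structure IsOpenFilter {X : Type u} [TopologicalSpace X] (F : Set (Set X)) : Prop where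
  nonempty : F.Nonempty
  isOpen_mem : ∀ U ∈ F, IsOpen U
  nonempty_mem : ∀ U ∈ F, U.Nonempty
  inter_mem : ∀ U ∈ F, ∀ V ∈ F, U ∩ V ∈ F
  superset_mem : ∀ U ∈ F, ∀ V : Set X, IsOpen V → U ⊆ V → V ∈ F

/-- An open ultrafilter: a maximal open filter. -/
def IsOpenUltrafilter {X : Type u} [TopologicalSpace X] (F : Set (Set X)) : Prop :=
  IsOpenFilter F ∧ ∀ G : Set (Set X), IsOpenFilter G → F ⊆ G → G = F

/-- The adherence of a family of sets: `⋂ {cl U : U ∈ F}`. -/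
def adh {X : Type u} [TopologicalSpace X] (F : Set (Set X)) : Set X :=
  ⋂ U ∈ F, closure U

/-- `X` is `n`-H-closed: `X` is `n`-Hausdorff and closed in every `n`-Hausdorff space
in which it embeds. -/
def NHClosed (X : Type u) [TopologicalSpace X] (n : ℕ) : Prop :=
  NHausdorff X n ∧
    ∀ (Z : Type u) (_ : TopologicalSpace Z) (e : X → Z),
      NHausdorff Z n → IsEmbedding e → IsClosed (Set.range e)

set_option linter.unusedSectionVars false

section Aux
variable {X : Type u} [TopologicalSpace X]

theorem IsOpenFilter.univ_mem {F : Set (Set X)} (hF : IsOpenFilter F) : univ ∈ F := by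
  obtain ⟨U, hU⟩ := hF.nonempty
  exact hF.superset_mem U hU univ isOpen_univ (subset_univ U)

theorem exists_openUltrafilter {F : Set (Set X)} (hF : IsOpenFilter F) :
    ∃ G, IsOpenUltrafilter G ∧ F ⊆ G := by
  have hz : ∀ c ⊆ {G | IsOpenFilter G ∧ F ⊆ G}, IsChain (· ⊆ ·) c → c.Nonempty →
      ∃ ub ∈ {G | IsOpenFilter G ∧ F ⊆ G}, ∀ s ∈ c, s ⊆ ub := by
    intro c hcS hchain hcne
    obtain ⟨G₀, hG₀⟩ := hcne
    refine ⟨⋃₀ c, ⟨⟨?_, ?_, ?_, ?_, ?_⟩, ?_⟩, fun s hs => subset_sUnion_of_mem hs⟩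
    · obtain ⟨U, hU⟩ := (hcS hG₀).1.nonempty
      exact ⟨U, G₀, hG₀, hU⟩
    · rintro U ⟨G, hG, hUG⟩
      exact (hcS hG).1.isOpen_mem U hUG
    · rintro U ⟨G, hG, hUG⟩
      exact (hcS hG).1.nonempty_mem U hUG
    · rintro U ⟨G, hG, hUG⟩ V ⟨G', hG', hVG'⟩
      rcases hchain.total hG hG' with h | h
      · exact ⟨G', hG', (hcS hG').1.inter_mem U (h hUG) V hVG'⟩
      · exact ⟨G, hG, (hcS hG).1.inter_mem U hUG V (h hVG')⟩
    · rintro U ⟨G, hG, hUG⟩ V hV hUV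
      exact ⟨G, hG, (hcS hG).1.superset_mem U hUG V hV hUV⟩
    · exact (hcS hG₀).2.trans (subset_sUnion_of_mem hG₀)
  obtain ⟨m, hFm, hm⟩ := zorn_subset_nonempty {G | IsOpenFilter G ∧ F ⊆ G} hz F ⟨hF, subset_rfl⟩
  refine ⟨m, ⟨hm.prop.1, fun G hG hmG => ?_⟩, hm.prop.2⟩
  exact (hm.eq_of_subset ⟨hG, hm.prop.2.trans hmG⟩ hmG).symm

theorem IsOpenUltrafilter.mem_of_meets {U : Set (Set X)} (hU : IsOpenUltrafilter U) {V : Set X}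
    (hV : IsOpen V) (h : ∀ A ∈ U, (V ∩ A).Nonempty) : V ∈ U := by
  obtain ⟨A₀, hA₀⟩ := hU.1.nonempty
  set G := {W : Set X | IsOpen W ∧ ∃ A ∈ U, V ∩ A ⊆ W} with hGdef
  have hG : IsOpenFilter G := by
    refine ⟨⟨V, hV, A₀, hA₀, inter_subset_left⟩, fun W hW => hW.1, ?_, ?_, ?_⟩
    · rintro W ⟨hWo, A, hA, hVA⟩
      exact (h A hA).mono hVA
    · rintro W ⟨hWo, A, hA, hVA⟩ W' ⟨hW'o, A', hA', hVA'⟩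
      exact ⟨hWo.inter hW'o, A ∩ A', hU.1.inter_mem A hA A' hA',
        fun x hx => ⟨hVA ⟨hx.1, hx.2.1⟩, hVA' ⟨hx.1, hx.2.2⟩⟩⟩
    · rintro W ⟨hWo, A, hA, hVA⟩ W' hW'o hWW'
      exact ⟨hW'o, A, hA, hVA.trans hWW'⟩
  have hUG : U ⊆ G := fun A hA => ⟨hU.1.isOpen_mem A hA, A, hA, inter_subset_right⟩
  have := hU.2 G hG hUG
  rw [← this]
  exact ⟨hV, A₀, hA₀, inter_subset_left⟩

theorem IsOpenUltrafilter.mem_of_adh {U : Set (Set X)} (hU : IsOpenUltrafilter U) {x : X}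
    {V : Set X} (hx : x ∈ adh U) (hV : IsOpen V) (hxV : x ∈ V) : V ∈ U := by
  refine hU.mem_of_meets hV fun A hA => ?_
  have hxA : x ∈ closure A := by
    have := mem_iInter₂.1 hx A hA
    exact this
  exact mem_closure_iff.1 hxA V hV hxV

theorem IsOpenFilter.iInter_mem {ι : Type v} [Fintype ι] {F : Set (Set X)} (hF : IsOpenFilter F)
    (g : ι → Set X) (hg : ∀ i, g i ∈ F) : (⋂ i, g i) ∈ F := by
  classical
  have key : ∀ s : Finset ι, (⋂ i ∈ s, g i) ∈ F := by
    intro s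
    induction s using Finset.induction with
    | empty => simpa using hF.univ_mem
    | insert h _ _ ih =>
        rw [Finset.set_biInter_insert]
        exact hF.inter_mem _ (hg _) _ ih
  simpa using key Finset.univ
end Aux

section Card
variable {X : Type u} [TopologicalSpace X]

theorem exists_inj_of_ncard {t : Set X} {n : ℕ} (htf : t.Finite) (hcard : t.ncard = n) :
    ∃ x : Fin n → X, Injective x ∧ ∀ i, x i ∈ t := by
  haveI := htf.fintype
  have hc : Fintype.card t = n := by
    rw [← Nat.card_coe_set_eq, Nat.card_eq_fintype_card] at hcard
    exact hcard
  let e := (Fintype.equivFinOfCardEq hc).symm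
  refine ⟨fun i => (e i : X), fun i j hij => e.injective (Subtype.ext hij), fun i => (e i).2⟩

theorem finite_bound {S : Set X} {n : ℕ} (hn : 1 ≤ n)
    (h : ∀ x : Fin n → X, Injective x → (∀ i, x i ∈ S) → False) :
    S.Finite ∧ S.ncard ≤ n - 1 := by
  have hfin : S.Finite := by
    by_contra hinf
    obtain ⟨t, hts, htf, hcard⟩ := Set.Infinite.exists_subset_ncard_eq hinf n
    obtain ⟨x, hxinj, hxt⟩ := exists_inj_of_ncard htf hcard
    exact h x hxinj fun i => hts (hxt i)
  refine ⟨hfin, ?_⟩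
  by_contra hlt
  push_neg at hlt
  have hle : n ≤ S.ncard := by omega
  obtain ⟨t, hts, hcard⟩ := Set.exists_subset_card_eq hle
  obtain ⟨x, hxinj, hxt⟩ := exists_inj_of_ncard (hfin.subset hts) hcard
  exact h x hxinj fun i => hts (hxt i)

theorem adh_card {n : ℕ} (hn : 1 ≤ n) (hX : NHausdorff X n) {U : Set (Set X)}
    (hU : IsOpenUltrafilter U) : (adh U).Finite ∧ (adh U).ncard ≤ n - 1 := by
  refine finite_bound hn fun x hinj hmem => ?_
  obtain ⟨V, hV, hVempty⟩ := hX x hinj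
  have hmemU : ∀ i, V i ∈ U := fun i => hU.mem_of_adh (hmem i) (hV i).1 (hV i).2
  have : (⋂ i, V i) ∈ U := hU.1.iInter_mem V hmemU
  have hne := hU.1.nonempty_mem _ this
  rw [hVempty] at hne
  exact hne.ne_empty rfl
end Card

section Cons
variable (X : Type u) [TopologicalSpace X] (n : ℕ)

def KPoints : Type u :=
  {p : Set (Set X) × Fin (n - 1) // IsOpenUltrafilter p.1 ∧ (p.2 : ℕ) < n - 1 - (adh p.1).ncard}

abbrev KExt : Type u := X ⊕ KPoints X n

variable {X n}

def KOpen (W : Set (KExt X n)) : Prop :=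
  IsOpen (Sum.inl ⁻¹' W) ∧ ∀ p : KPoints X n, Sum.inr p ∈ W → Sum.inl ⁻¹' W ∈ p.1.1

instance : TopologicalSpace (KExt X n) where
  IsOpen := KOpen
  isOpen_univ := by
    constructor
    · exact isOpen_univ
    · intro p _
      obtain ⟨A, hA⟩ := p.2.1.1.nonempty
      exact p.2.1.1.superset_mem A hA _ isOpen_univ (by simp)
  isOpen_inter := by
    rintro W W' ⟨hW1, hW2⟩ ⟨hW'1, hW'2⟩
    refine ⟨hW1.inter hW'1, fun p hp => ?_⟩
    exact p.2.1.1.inter_mem _ (hW2 p hp.1) _ (hW'2 p hp.2)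
  isOpen_sUnion := by
    intro S hS
    constructor
    · rw [preimage_sUnion]
      exact isOpen_biUnion fun W hW => (hS W hW).1
    · rintro p ⟨W, hWS, hpW⟩
      refine p.2.1.1.superset_mem _ ((hS W hWS).2 p hpW) _ ?_ ?_
      · rw [preimage_sUnion]
        exact isOpen_biUnion fun W hW => (hS W hW).1
      · exact fun x hx => ⟨W, hWS, hx⟩

theorem kOpen_def {W : Set (KExt X n)} (h : IsOpen W) :
    IsOpen (Sum.inl ⁻¹' W) ∧ ∀ p : KPoints X n, Sum.inr p ∈ W → Sum.inl ⁻¹' W ∈ p.1.1 := h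

theorem isOpen_inl_image {V : Set X} (hV : IsOpen V) :
    IsOpen (Sum.inl '' V : Set (KExt X n)) := by
  constructor
  · rw [Set.preimage_image_eq V Sum.inl_injective]
    exact hV
  · rintro p ⟨x, _, hx⟩
    exact absurd hx (by simp)

theorem isEmbedding_inl : IsEmbedding (Sum.inl : X → KExt X n) := by
  rw [isEmbedding_iff]
  refine ⟨⟨?_⟩, Sum.inl_injective⟩
  apply TopologicalSpace.ext_iff.2
  intro V
  rw [isOpen_induced_iff]
  constructor
  · intro hV
    exact ⟨Sum.inl '' V, isOpen_inl_image hV, Set.preimage_image_eq V Sum.inl_injective⟩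
  · rintro ⟨W, hW, rfl⟩
    exact hW.1

theorem dense_range_inl : Dense (Set.range (Sum.inl : X → KExt X n)) := by
  rw [dense_iff_inter_open]
  rintro W hW ⟨w, hw⟩
  cases w with
  | inl x => exact ⟨Sum.inl x, hw, x, rfl⟩
  | inr p =>
      obtain ⟨x, hx⟩ := p.2.1.1.nonempty_mem _ (hW.2 p hw)
      exact ⟨Sum.inl x, hx, x, rfl⟩

/-- basic neighborhood of a new point -/
def nbhdOf (p : KPoints X n) (A : Set X) : Set (KExt X n) := {Sum.inr p} ∪ Sum.inl '' A

theorem isOpen_nbhdOf {p : KPoints X n} {A : Set X} (hA : A ∈ p.1.1) :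
    IsOpen (nbhdOf p A) := by
  have hpre : Sum.inl ⁻¹' (nbhdOf p A) = A := by
    ext x; simp [nbhdOf]
  constructor
  · rw [hpre]; exact p.2.1.1.isOpen_mem A hA
  · rintro q hq
    rw [hpre]
    rcases hq with hq | ⟨x, _, hx⟩
    · simp only [mem_singleton_iff, Sum.inr.injEq] at hq
      cases hq; exact hA
    · exact absurd hx (by simp)

theorem mem_nbhdOf (p : KPoints X n) (A : Set X) : Sum.inr p ∈ nbhdOf p A :=
  Or.inl rfl

theorem disjoint_of_ne_ultra {U U' : Set (Set X)} (hU : IsOpenUltrafilter U)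
    (hU' : IsOpenUltrafilter U') (hne : U ≠ U') :
    ∃ A ∈ U, ∃ B ∈ U', A ∩ B = ∅ := by
  by_contra h
  push_neg at h
  have hsub : U' ⊆ U := by
    intro B hB
    refine hU.mem_of_meets (hU'.1.isOpen_mem B hB) fun A hA => ?_
    rw [Set.inter_comm]
    exact h A hA B hB
  exact hne (hU'.2 U hU.1 hsub)

end Cons
section Main
variable {X : Type u} [TopologicalSpace X] {n : ℕ}

theorem nHausdorff_KExt (hn : 2 ≤ n) (hX : NHausdorff X n) : NHausdorff (KExt X n) n := by
  classical
  intro y hinj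
  by_cases hA : ∃ (i j : Fin n) (p q : KPoints X n),
      y i = Sum.inr p ∧ y j = Sum.inr q ∧ p.1.1 ≠ q.1.1
  · obtain ⟨i, j, p, q, hyi, hyj, hne⟩ := hA
    obtain ⟨A, hA, B, hB, hAB⟩ := disjoint_of_ne_ultra p.2.1 q.2.1 hne
    have hij : i ≠ j := by
      intro h
      apply hne
      rw [h, hyj] at hyi
      cases Sum.inr_injective hyi
      rfl
    refine ⟨fun l => if l = i then nbhdOf p A else if l = j then nbhdOf q B else univ, ?_, ?_⟩
    · intro l
      by_cases h1 : l = i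
      · subst h1
        simp only [if_pos rfl]
        exact ⟨isOpen_nbhdOf hA, hyi ▸ mem_nbhdOf p A⟩
      by_cases h2 : l = j
      · subst h2
        simp only [if_neg h1, if_pos rfl]
        exact ⟨isOpen_nbhdOf hB, hyj ▸ mem_nbhdOf q B⟩
      · simp only [if_neg h1, if_neg h2]
        exact ⟨isOpen_univ, mem_univ _⟩
    · apply Set.eq_empty_iff_forall_notMem.2
      intro z hz
      have hzi := mem_iInter.1 hz i
      have hzj := mem_iInter.1 hz j
      rw [if_pos rfl] at hzi
      rw [if_neg (Ne.symm hij), if_pos rfl] at hzj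
      rcases hzi with hz1 | ⟨t, htA, rfl⟩
      · rw [mem_singleton_iff] at hz1
        subst hz1
        rcases hzj with hz2 | ⟨t, _, ht⟩
        · rw [mem_singleton_iff] at hz2
          cases Sum.inr_injective hz2
          exact hne rfl
        · exact Sum.inl_ne_inr ht
      · rcases hzj with hz2 | ⟨t', htB, ht'⟩
        · rw [mem_singleton_iff] at hz2
          exact Sum.inl_ne_inr hz2
        · cases Sum.inl_injective ht'
          have : t ∈ A ∩ B := ⟨htA, htB⟩
          rw [hAB] at this
          exact this
  by_cases hB : ∃ (i j : Fin n) (p : KPoints X n) (x : X),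
      y i = Sum.inr p ∧ y j = Sum.inl x ∧ x ∉ adh p.1.1
  · obtain ⟨i, j, p, x, hyi, hyj, hx⟩ := hB
    have hexA : ∃ A ∈ p.1.1, x ∉ closure A := by
      by_contra hcon
      push_neg at hcon
      exact hx (mem_iInter₂.2 hcon)
    obtain ⟨A, hA, hxA⟩ := hexA
    set V : Set X := (closure A)ᶜ with hVdef
    have hVo : IsOpen V := isClosed_closure.isOpen_compl
    have hxV : x ∈ V := hxA
    have hVA : V ∩ A = ∅ := by
      apply Set.eq_empty_iff_forall_notMem.2
      rintro t ⟨ht1, ht2⟩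
      exact ht1 (subset_closure ht2)
    have hij : i ≠ j := by
      intro h
      rw [h, hyj] at hyi
      exact Sum.inl_ne_inr hyi
    refine ⟨fun l => if l = i then nbhdOf p A else if l = j then Sum.inl '' V else univ, ?_, ?_⟩
    · intro l
      by_cases h1 : l = i
      · subst h1
        simp only [if_pos rfl]
        exact ⟨isOpen_nbhdOf hA, hyi ▸ mem_nbhdOf p A⟩
      by_cases h2 : l = j
      · subst h2
        simp only [if_neg h1, if_pos rfl]
        exact ⟨isOpen_inl_image hVo, hyj ▸ ⟨x, hxV, rfl⟩⟩
      · simp only [if_neg h1, if_neg h2]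
        exact ⟨isOpen_univ, mem_univ _⟩
    · apply Set.eq_empty_iff_forall_notMem.2
      intro z hz
      have hzi := mem_iInter.1 hz i
      have hzj := mem_iInter.1 hz j
      rw [if_pos rfl] at hzi
      rw [if_neg (Ne.symm hij), if_pos rfl] at hzj
      rcases hzi with hz1 | ⟨t, htA, rfl⟩
      · rw [mem_singleton_iff] at hz1
        subst hz1
        obtain ⟨t, _, ht⟩ := hzj
        exact Sum.inl_ne_inr ht
      · obtain ⟨t', htV, ht'⟩ := hzj
        cases Sum.inl_injective ht'
        have : t ∈ V ∩ A := ⟨htV, htA⟩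
        rw [hVA] at this
        exact this
  by_cases hC : ∀ i, ∃ x, y i = Sum.inl x
  · choose x hx using hC
    have hxinj : Injective x := fun i j h => hinj (by rw [hx i, hx j, h])
    obtain ⟨U, hU, hUe⟩ := hX x hxinj
    refine ⟨fun l => Sum.inl '' (U l), ?_, ?_⟩
    · intro l
      exact ⟨isOpen_inl_image (hU l).1, hx l ▸ ⟨x l, (hU l).2, rfl⟩⟩
    · apply Set.eq_empty_iff_forall_notMem.2
      intro z hz
      have h0 := mem_iInter.1 hz ⟨0, by omega⟩
      obtain ⟨t, _, rfl⟩ := h0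
      have : t ∈ ⋂ l, U l := mem_iInter.2 fun l => by
        obtain ⟨t', ht', htt⟩ := mem_iInter.1 hz l
        cases Sum.inl_injective htt
        exact ht'
      rw [hUe] at this
      exact this
  · push_neg at hA hB hC
    obtain ⟨i₀, hi₀⟩ := hC
    obtain ⟨p₀, hp₀⟩ : ∃ p, y i₀ = Sum.inr p := by
      cases hyi : y i₀ with
      | inl x => exact absurd hyi (hi₀ x)
      | inr p => exact ⟨p, rfl⟩
    obtain ⟨hfin, hk⟩ := adh_card (by omega : 1 ≤ n) hX p₀.2.1
    set k := (adh p₀.1.1).ncard with hkdef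
    set T : Set (KPoints X n) := {q | q.1.1 = p₀.1.1} with hTdef
    set S : Set (KExt X n) := Sum.inl '' (adh p₀.1.1) ∪ Sum.inr '' T with hSdef
    have hrange : ∀ l, y l ∈ S := by
      intro l
      cases hyl : y l with
      | inl x => exact Or.inl ⟨x, hB i₀ l p₀ x hp₀ hyl, rfl⟩
      | inr q => exact Or.inr ⟨q, hA l i₀ q p₀ hyl hp₀, rfl⟩
    have hinjOn : InjOn (fun q : KPoints X n => (q.1.2 : ℕ)) T := by
      intro q hq q' hq' h
      exact Subtype.ext (Prod.ext (hq.trans hq'.symm) (Fin.ext h))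
    have hIiofin : (Set.Iio (n - 1 - k)).Finite := Set.finite_Iio _
    have hTcard : T.ncard ≤ n - 1 - k := by
      have h1 : T.ncard ≤ (Set.Iio (n - 1 - k)).ncard := by
        apply Set.ncard_le_ncard_of_injOn (fun q : KPoints X n => (q.1.2 : ℕ)) ?_ hinjOn hIiofin
        intro q hq
        have h2 := q.2.2
        rw [hTdef, mem_setOf_eq] at hq
        simp only [hq] at h2
        exact h2
      have h3 : (Set.Iio (n - 1 - k)).ncard = n - 1 - k := by
        rw [← Finset.coe_range, Set.ncard_coe_finset, Finset.card_range]
      omega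
    have hTfin : T.Finite := by
      apply Set.Finite.of_finite_image ?_ hinjOn
      exact hIiofin.subset (by
        rintro m ⟨q, hq, rfl⟩
        have h2 := q.2.2
        rw [hTdef, mem_setOf_eq] at hq
        simp only [hq] at h2
        exact h2)
    have hSfin : S.Finite := (hfin.image _).union (hTfin.image _)
    have hS1 : (Sum.inl '' (adh p₀.1.1) : Set (KExt X n)).ncard = k :=
      Set.ncard_image_of_injective _ Sum.inl_injective
    have hS2 : (Sum.inr '' T : Set (KExt X n)).ncard ≤ n - 1 - k := by
      rw [Set.ncard_image_of_injective _ Sum.inr_injective]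
      exact hTcard
    have hScard : S.ncard ≤ n - 1 := by
      have h4 := Set.ncard_union_le (Sum.inl '' (adh p₀.1.1)) (Sum.inr '' T : Set (KExt X n))
      rw [hSdef]
      omega
    have hrn : (Set.range y).ncard = n := by
      rw [← Set.image_univ, Set.ncard_image_of_injective _ hinj, Set.ncard_univ,
        Nat.card_eq_fintype_card, Fintype.card_fin]
    have hle : n ≤ S.ncard :=
      le_of_eq_of_le hrn.symm (Set.ncard_le_ncard (Set.range_subset_iff.2 hrange) hSfin)
    exact absurd (hle.trans hScard) (by omega)

end Main
section Closed
variable {X : Type u} [TopologicalSpace X] {n : ℕ}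

theorem closed_KExt (hn : 2 ≤ n) (hX : NHausdorff X n) {Z : Type u} [TopologicalSpace Z]
    (hZ : NHausdorff Z n) (e : KExt X n → Z) (he : IsEmbedding e) :
    IsClosed (Set.range e) := by
  by_contra hcl
  obtain ⟨z, hzc, hznot⟩ : ∃ z ∈ closure (Set.range e), z ∉ Set.range e := by
    by_contra hz
    push_neg at hz
    exact hcl (isClosed_of_closure_subset hz)
  set f : X → Z := e ∘ Sum.inl with hf
  have hfc : Continuous f := he.continuous.comp isEmbedding_inl.continuous
  have hzf : z ∈ closure (Set.range f) := by
    have h1 : Set.range e ⊆ closure (Set.range f) := by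
      have h2 : Set.range f = e '' (Set.range (Sum.inl : X → KExt X n)) := by
        rw [hf, Set.range_comp]
      rw [h2]
      rintro w ⟨v, rfl⟩
      have hv : v ∈ closure (Set.range (Sum.inl : X → KExt X n)) := dense_range_inl v
      exact (image_closure_subset_closure_image he.continuous) ⟨v, hv, rfl⟩
    exact closure_minimal h1 isClosed_closure hzc
  set F₀ : Set (Set X) := {U | IsOpen U ∧ ∃ W : Set Z, IsOpen W ∧ z ∈ W ∧ f ⁻¹' W ⊆ U} with hF₀
  have hF₀f : IsOpenFilter F₀ := by
    refine ⟨⟨univ, isOpen_univ, univ, isOpen_univ, mem_univ z, by simp⟩, fun U hU => hU.1,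
      ?_, ?_, ?_⟩
    · rintro U ⟨hUo, W, hWo, hzW, hWU⟩
      obtain ⟨w, hwW, x, rfl⟩ := mem_closure_iff.1 hzf W hWo hzW
      exact ⟨x, hWU hwW⟩
    · rintro U ⟨hUo, W, hWo, hzW, hWU⟩ U' ⟨hU'o, W', hW'o, hzW', hW'U'⟩
      exact ⟨hUo.inter hU'o, W ∩ W', hWo.inter hW'o, ⟨hzW, hzW'⟩,
        fun x hx => ⟨hWU hx.1, hW'U' hx.2⟩⟩
    · rintro U ⟨hUo, W, hWo, hzW, hWU⟩ V hVo hUV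
      exact ⟨hVo, W, hWo, hzW, hWU.trans hUV⟩
  obtain ⟨U, hUu, hF₀U⟩ := exists_openUltrafilter hF₀f
  obtain ⟨hadhfin, hadhk⟩ := adh_card (by omega : 1 ≤ n) hX hUu
  set k := (adh U).ncard with hkdef
  obtain ⟨a, hainj, hamem⟩ := exists_inj_of_ncard hadhfin hkdef.symm
  have hjlt : ∀ j : Fin (n - 1 - k), (j : ℕ) < n - 1 := fun j => by have := j.2; omega
  set q : Fin (n - 1 - k) → KPoints X n := fun j =>
    ⟨(U, ⟨(j : ℕ), hjlt j⟩), hUu, by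
      show (j : ℕ) < n - 1 - (adh U).ncard
      rw [← hkdef]
      exact j.2⟩ with hqdef
  set I := Option ((Fin k) ⊕ (Fin (n - 1 - k))) with hI
  set g : I → Z := fun t => match t with
    | none => z
    | some (Sum.inl i) => f (a i)
    | some (Sum.inr j) => e (Sum.inr (q j)) with hg
  have hcard : Fintype.card I = n := by
    simp only [hI, Fintype.card_option, Fintype.card_sum, Fintype.card_fin]
    omega
  set eqv : I ≃ Fin n := Fintype.equivFinOfCardEq hcard with heqv
  have hginj : Injective g := by
    rintro (_ | (i | j)) (_ | (i' | j')) h <;> simp only [hg] at h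
    · rfl
    · exact absurd ⟨Sum.inl (a i'), h.symm⟩ hznot
    · exact absurd ⟨Sum.inr (q j'), h.symm⟩ hznot
    · exact absurd ⟨Sum.inl (a i), h⟩ hznot
    · rw [hainj (Sum.inl_injective (he.injective h))]
    · exact absurd (he.injective h) (by simp)
    · exact absurd ⟨Sum.inr (q j), h⟩ hznot
    · exact absurd (he.injective h) (by simp)
    · have h3 : ((q j).1.2 : ℕ) = ((q j').1.2 : ℕ) := by
        rw [Sum.inr_injective (he.injective h)]
      simp only [hqdef] at h3
      rw [Fin.ext h3]
  have hxinj : Injective (g ∘ eqv.symm) := hginj.comp eqv.symm.injective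
  obtain ⟨V, hV, hVe⟩ := hZ (g ∘ eqv.symm) hxinj
  set W : I → Set Z := fun t => V (eqv t) with hW
  have hWmem : ∀ t, g t ∈ W t := by
    intro t
    have h := (hV (eqv t)).2
    simpa [hW, Equiv.symm_apply_apply] using h
  have hWopen : ∀ t, IsOpen (W t) := fun t => (hV (eqv t)).1
  have hT : ∀ t : I, f ⁻¹' (W t) ∈ U := by
    rintro (_ | (i | j))
    · exact hF₀U ⟨hWopen none |>.preimage hfc, W none, hWopen none, hWmem none, subset_rfl⟩
    · exact hUu.mem_of_adh (hamem i) ((hWopen _).preimage hfc) (hWmem (some (Sum.inl i)))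
    · have hopen : IsOpen (e ⁻¹' (W (some (Sum.inr j)))) :=
        (hWopen _).preimage he.continuous
      have hmemq : Sum.inr (q j) ∈ e ⁻¹' (W (some (Sum.inr j))) := hWmem (some (Sum.inr j))
      have h5 := (kOpen_def hopen).2 (q j) hmemq
      have h6 : Sum.inl ⁻¹' (e ⁻¹' (W (some (Sum.inr j)))) = f ⁻¹' (W (some (Sum.inr j))) := by
        rw [hf, Set.preimage_comp]
      rw [h6] at h5
      exact h5
  have hint : (⋂ t, f ⁻¹' (W t)) ∈ U := hUu.1.iInter_mem _ hT
  obtain ⟨x₀, hx₀⟩ := hUu.1.nonempty_mem _ hint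
  have hfin : f x₀ ∈ ⋂ i, V i := by
    apply mem_iInter.2
    intro i
    have h7 := mem_iInter.1 hx₀ (eqv.symm i)
    simpa [hW, Equiv.apply_symm_apply] using h7
  rw [hVe] at hfin
  exact hfin

end Closed

theorem stmt15 {X : Type u} [TopologicalSpace X] (n : ℕ) (hn : 2 ≤ n)
    (hX : NHausdorff X n) :
    ∃ (Y : Type u) (_ : TopologicalSpace Y) (e : X → Y),
      IsEmbedding e ∧ Dense (Set.range e) ∧ NHClosed Y n := by
  refine ⟨KExt X n, inferInstance, Sum.inl, isEmbedding_inl, dense_range_inl,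
    nHausdorff_KExt hn hX, ?_⟩
  intro Z tZ e hZ he
  letI := tZ
  exact closed_KExt hn hX hZ e he
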